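/- Let q ≥ 1 be an integer. (i) Let θ ∈ [0, 2π], z := e^{iθ}, and δ_1, δ_2 ∈ (0, π/2). If min_{k∈ℤ}|θ − kπ| ≥ δ_1 (so that z ≠ ±1), then |F_q(z)| ≤ 2/δ_1. If z ≠ ±1 and min_{k∈ℤ}|qθ − kπ| ≥ δ_2, then |F_q(z)| ≥ δ_2/2. (ii) If x, x_0 ∈ ℝ with x > x_0 > 1, then x^{q−1}(1 − x_0^{−2q}) ≤ F_q(x) ≤ x^{q−1}/(1 − x_0^{−2}). -/

import Mathlib

open Real

/-- The function `F_q(z) = (z^q - z^{-q})/(z - z⁻¹)`. -/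
noncomputable def Ffun {K : Type*} [Field K] (q : ℕ) (z : K) : K :=
  (z ^ (q : ℤ) - z ^ (-(q : ℤ))) / (z - z⁻¹)

lemma abs_sin_ge {δ t : ℝ} (hδ : 0 < δ) (hδ' : δ < π/2)
    (hk : ∀ k : ℤ, δ ≤ |t - k*π|) : δ/2 ≤ |Real.sin t| := by
  have hπ := Real.pi_pos
  set k : ℤ := round (t/π) with hkdef
  set d : ℝ := t - k*π with hd
  have hd2 : |d| ≤ π/2 := by
    have h1 : |t/π - k| ≤ 1/2 := abs_sub_round (t/π)
    have : |t/π - k| * π ≤ (1/2) * π := by nlinarith [abs_nonneg (t/π - k)]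
    have heq : t/π - k = d/π := by rw [hd]; field_simp
    calc |d| = |t/π - k| * π := by
          rw [heq, abs_div, abs_of_pos hπ, div_mul_cancel₀ _ (ne_of_gt hπ)]
      _ ≤ π/2 := by linarith
  have hdδ : δ ≤ |d| := hk k
  have hsin : |Real.sin t| = |Real.sin d| := by
    have : t = d + k*π := by ring
    rw [this, Real.sin_add_int_mul_pi, abs_mul]
    rcases Int.even_or_odd k with h' | h' <;> simp [h'.neg_one_zpow]
  rw [hsin]
  have habs : Real.sin |d| ≤ |Real.sin d| := by
    rcases abs_cases d with ⟨h1, _⟩ | ⟨h1, h2⟩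
    · rw [h1]; exact le_abs_self _
    · rw [h1, Real.sin_neg]; exact neg_le_abs _
  have hmono : Real.sin δ ≤ Real.sin |d| :=
    Real.sin_le_sin_of_le_of_le_pi_div_two (by linarith [abs_nonneg d]) hd2 hdδ
  have hlow : δ/2 ≤ Real.sin δ := by
    have := Real.mul_le_sin (le_of_lt hδ) (le_of_lt hδ')
    have h4 : π ≤ 4 := by linarith [Real.pi_le_four]
    have h5 : δ/2 ≤ 2/π * δ := by
      rw [div_mul_eq_mul_div, div_le_div_iff₀ (by norm_num) hπ]
      nlinarith
    linarith
  linarith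

lemma zpow_neg_two_eq (x : ℝ) : x ^ (-2:ℤ) = x⁻¹^2 := by
  rw [inv_pow, ← zpow_natCast x 2, ← zpow_neg]
  norm_num

lemma zpow_neg_two_mul_eq (x : ℝ) (q : ℕ) : x ^ (-(2*q:ℤ)) = (x^q)⁻¹^2 := by
  rw [inv_pow, ← pow_mul, ← zpow_natCast x (q*2), ← zpow_neg]
  congr 1; push_cast; ring

lemma key_id (x y : ℝ) (hx : x ≠ 0) (hy : y ≠ 0) (hxx : x - x⁻¹ ≠ 0)
    (hD : 1 - x⁻¹^2 ≠ 0) :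
    (y - y⁻¹)/(x - x⁻¹) = (y/x) * ((1 - y⁻¹^2)/(1 - x⁻¹^2)) := by
  rw [mul_div_assoc', div_eq_div_iff hxx hD]
  field_simp

lemma Ffun_exp (q : ℕ) {θ : ℝ} (hs : Real.sin θ ≠ 0) :
    Ffun q (Complex.exp ((θ : ℂ) * Complex.I)) =
      ((Real.sin (q*θ) / Real.sin θ : ℝ) : ℂ) := by
  have key : ∀ w : ℝ, Complex.exp ((w:ℂ) * Complex.I) - (Complex.exp ((w:ℂ) * Complex.I))⁻¹
      = 2 * Complex.sin w * Complex.I := by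
    intro w
    rw [← Complex.exp_neg, ← neg_mul, Complex.exp_mul_I, Complex.exp_mul_I,
      Complex.cos_neg, Complex.sin_neg]
    ring
  have hzq : (Complex.exp ((θ:ℂ) * Complex.I)) ^ (q : ℤ)
      = Complex.exp (((q*θ : ℝ) : ℂ) * Complex.I) := by
    rw [← Complex.exp_int_mul]; push_cast; ring_nf
  have hzq' : (Complex.exp ((θ:ℂ) * Complex.I)) ^ (-(q : ℤ))
      = (Complex.exp (((q*θ : ℝ) : ℂ) * Complex.I))⁻¹ := by
    rw [zpow_neg, hzq]
  have hz1 : (Complex.exp ((θ:ℂ) * Complex.I))⁻¹ = (Complex.exp ((θ:ℂ) * Complex.I))⁻¹ := rfl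
  unfold Ffun
  rw [hzq, hzq', key, show (Complex.exp ((θ:ℂ)*Complex.I) - (Complex.exp ((θ:ℂ)*Complex.I))⁻¹)
      = 2 * Complex.sin θ * Complex.I from key θ]
  rw [mul_div_mul_right _ _ Complex.I_ne_zero]
  rw [← Complex.ofReal_sin, ← Complex.ofReal_sin, ← Complex.ofReal_ofNat,
    ← Complex.ofReal_mul, ← Complex.ofReal_mul, ← Complex.ofReal_div]
  congr 1
  field_simp

theorem F_function_bounds (q : ℕ) (hq : 1 ≤ q) :
    (∀ θ δ₁ : ℝ, 0 ≤ θ → θ ≤ 2 * Real.pi → 0 < δ₁ → δ₁ < Real.pi / 2 →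
      (∀ k : ℤ, δ₁ ≤ |θ - k * Real.pi|) →
      ‖Ffun q (Complex.exp ((θ : ℂ) * Complex.I))‖ ≤ 2 / δ₁) ∧
    (∀ θ δ₂ : ℝ, 0 ≤ θ → θ ≤ 2 * Real.pi → 0 < δ₂ → δ₂ < Real.pi / 2 →
      Complex.exp ((θ : ℂ) * Complex.I) ≠ 1 → Complex.exp ((θ : ℂ) * Complex.I) ≠ -1 →
      (∀ k : ℤ, δ₂ ≤ |(q : ℝ) * θ - k * Real.pi|) →
      δ₂ / 2 ≤ ‖Ffun q (Complex.exp ((θ : ℂ) * Complex.I))‖) ∧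
    (∀ x x₀ : ℝ, 1 < x₀ → x₀ < x →
      x ^ (q - 1) * (1 - x₀ ^ (-(2 * q : ℤ))) ≤ Ffun q x ∧
      Ffun q x ≤ x ^ (q - 1) / (1 - x₀ ^ (-2 : ℤ))) := by
  refine ⟨?_, ?_, ?_⟩
  · -- upper bound
    intro θ δ₁ h0 h2 hδ hδ' hk
    have hs : Real.sin θ ≠ 0 := by
      intro h
      obtain ⟨n, hn⟩ := Real.sin_eq_zero_iff.1 h
      have := hk n
      rw [hn] at this
      simp at this
      linarith
    rw [Ffun_exp q hs, Complex.norm_real, Real.norm_eq_abs, abs_div]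
    have h1 : δ₁/2 ≤ |Real.sin θ| := abs_sin_ge hδ hδ' hk
    have h2' : |Real.sin (q*θ)| ≤ 1 := Real.abs_sin_le_one _
    rw [div_le_div_iff₀ (by linarith) hδ]
    nlinarith
  · -- lower bound
    intro θ δ₂ h0 h2 hδ hδ' hz1 hzm1 hk
    have hs : Real.sin θ ≠ 0 := by
      intro h
      obtain ⟨n, hn⟩ := Real.sin_eq_zero_iff.1 h
      have he : Complex.exp ((θ:ℂ) * Complex.I) = (-1 : ℂ) ^ n := by
        rw [← hn]
        push_cast
        rw [mul_assoc, Complex.exp_int_mul, Complex.exp_pi_mul_I]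
      rcases Int.even_or_odd n with he' | ho
      · exact hz1 (by rw [he, he'.neg_one_zpow])
      · exact hzm1 (by rw [he, ho.neg_one_zpow])
    rw [Ffun_exp q hs, Complex.norm_real, Real.norm_eq_abs, abs_div]
    have h1 : δ₂/2 ≤ |Real.sin ((q:ℝ)*θ)| := abs_sin_ge hδ hδ' hk
    have h2' : |Real.sin θ| ≤ 1 := Real.abs_sin_le_one _
    have h3 : 0 < |Real.sin θ| := abs_pos.2 hs
    rw [le_div_iff₀ h3]
    nlinarith
  · -- real bounds
    intro x x₀ h1 h2
    have hx1 : 1 < x := h1.trans h2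
    have hx0 : (0:ℝ) < x := by linarith
    have hx00 : (0:ℝ) < x₀ := by linarith
    set y : ℝ := x ^ q with hy
    clear_value y
    have hy1 : 1 < y := hy ▸ one_lt_pow₀ hx1 (by omega)
    have hy0 : (0:ℝ) < y := by linarith
    have hzq : x ^ (-(q:ℤ)) = y⁻¹ := by rw [zpow_neg, zpow_natCast, hy]
    have hq1 : x ^ (q-1) = y / x := by
      rw [hy, eq_div_iff (ne_of_gt hx0), ← pow_succ]
      congr 1; omega
    have hform : Ffun q x = (y/x) * ((1 - y⁻¹^2) / (1 - x⁻¹^2)) := by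
      unfold Ffun
      rw [hzq, zpow_natCast, ← hy]
      have hlt : x⁻¹ < x := by
        have := inv_lt_one_of_one_lt₀ hx1; linarith
      have hxx : x - x⁻¹ ≠ 0 := sub_ne_zero.2 (ne_of_gt hlt)
      have hD : 1 - x⁻¹^2 ≠ 0 := by
        have : x⁻¹ < 1 := inv_lt_one_of_one_lt₀ hx1
        have : x⁻¹^2 < 1 := by nlinarith [inv_pos.2 hx0]
        linarith
      exact key_id x y (ne_of_gt hx0) (ne_of_gt hy0) hxx hD
    -- basic facts
    have hxinv : x⁻¹^2 < 1 := by
      have h := inv_lt_one_of_one_lt₀ hx1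
      nlinarith [inv_pos.2 hx0]
    have hxinv0 : 0 < x⁻¹^2 := by positivity
    have hx0inv : x₀⁻¹^2 < 1 := by
      have h := inv_lt_one_of_one_lt₀ h1
      nlinarith [inv_pos.2 hx00]
    have hle : x⁻¹^2 ≤ x₀⁻¹^2 := by
      have : x₀ ≤ x := le_of_lt h2
      have := inv_anti₀ hx00 this
      nlinarith [inv_pos.2 hx0]
    have hyinv : y⁻¹^2 < 1 := by
      have h := inv_lt_one_of_one_lt₀ hy1
      nlinarith [inv_pos.2 hy0]
    have hyinv0 : 0 < y⁻¹^2 := by positivity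
    have hq20 : x₀ ^ (-(2*q:ℤ)) = (x₀^q)⁻¹^2 := zpow_neg_two_mul_eq x₀ q
    have hq2 : x ^ (-(2*q:ℤ)) = y⁻¹^2 := by rw [zpow_neg_two_mul_eq x q, hy]
    have hylex : y⁻¹^2 ≤ (x₀^q)⁻¹^2 := by
      have hp : x₀^q ≤ x^q := pow_le_pow_left₀ (le_of_lt hx00) (le_of_lt h2) q
      have h' : (x^q)⁻¹ ≤ (x₀^q)⁻¹ := inv_anti₀ (pow_pos hx00 q) hp
      rw [hy]
      exact pow_le_pow_left₀ (by positivity) h' 2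
    have hx02 : x₀ ^ (-2:ℤ) = x₀⁻¹^2 := zpow_neg_two_eq x₀
    constructor
    · rw [hform, hq1, hq20]
      have hyx : 0 < y / x := div_pos hy0 hx0
      have step1 : 1 - (x₀^q)⁻¹^2 ≤ 1 - y⁻¹^2 := by linarith
      have step2 : (1 - y⁻¹^2) ≤ (1 - y⁻¹^2) / (1 - x⁻¹^2) := by
        rw [le_div_iff₀ (by linarith)]
        exact mul_le_of_le_one_right (by linarith) (by linarith)
      exact mul_le_mul_of_nonneg_left (step1.trans step2) (le_of_lt hyx)
    · rw [hform, hq1, hx02]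
      have hyx : 0 < y / x := div_pos hy0 hx0
      have step : (1 - y⁻¹^2) / (1 - x⁻¹^2) ≤ 1 / (1 - x₀⁻¹^2) := by
        apply div_le_div₀ (by linarith) (by linarith) (by linarith) (by linarith)
      calc y/x * ((1 - y⁻¹^2) / (1 - x⁻¹^2)) ≤ y/x * (1/(1 - x₀⁻¹^2)) := by
            exact mul_le_mul_of_nonneg_left step (le_of_lt hyx)
        _ = y/x / (1 - x₀⁻¹^2) := by ring
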